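/- Let c₀ > 0 and let f : ℝ → ℝ be four times continuously differentiable such that for all x ∈ ℝ and all 1 ≤ k ≤ 4 one has |f^{(k)}(x)| ≤ c₀ and |f^{(k)}(x)| ≤ c₀ |f'(x)|^k. Let q : ℝ → ℝ be four times continuously differentiable and set R = f ∘ q. Then there is a constant C, depending only on c₀, such that for every 1 ≤ r ≤ 4 and every t ∈ ℝ: |f'(q(t)) · q^{(r)}(t)| ≤ C ( |R^{(r)}(t)| + ∑ |R^{(j₁)}(t)| ⋯ |R^{(j_k)}(t)| ), where the sum ranges over all 2 ≤ k ≤ r and all tuples (j₁,…,j_k) of positive integers with j₁ + ⋯ + j_k = r. -/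

import Mathlib

open scoped BigOperators

set_option maxHeartbeats 4000000

section helpers

private lemma faa_di_bruno4 (f q : ℝ → ℝ) (hf : ContDiff ℝ 4 f) (hq : ContDiff ℝ 4 q) :
    ∀ t : ℝ,
      deriv (f ∘ q) t = deriv f (q t) * deriv q t ∧
      iteratedDeriv 2 (f ∘ q) t =
        iteratedDeriv 2 f (q t) * (deriv q t) ^ 2 + deriv f (q t) * iteratedDeriv 2 q t ∧
      iteratedDeriv 3 (f ∘ q) t =
        iteratedDeriv 3 f (q t) * (deriv q t) ^ 3
          + 3 * iteratedDeriv 2 f (q t) * deriv q t * iteratedDeriv 2 q t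
          + deriv f (q t) * iteratedDeriv 3 q t ∧
      iteratedDeriv 4 (f ∘ q) t =
        iteratedDeriv 4 f (q t) * (deriv q t) ^ 4
          + 6 * iteratedDeriv 3 f (q t) * (deriv q t) ^ 2 * iteratedDeriv 2 q t
          + 3 * iteratedDeriv 2 f (q t) * (iteratedDeriv 2 q t) ^ 2
          + 4 * iteratedDeriv 2 f (q t) * deriv q t * iteratedDeriv 3 q t
          + deriv f (q t) * iteratedDeriv 4 q t := by
  have step : ∀ (g : ℝ → ℝ) (n : ℕ), ContDiff ℝ (n+1 : ℕ) g → ContDiff ℝ (n : ℕ) (deriv g) := by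
    intro g n hg
    have h : ContDiff ℝ ((n:ℕ∞)+1) g := by exact_mod_cast hg
    exact_mod_cast (contDiff_succ_iff_deriv.mp h).2.2
  have hf3 : ContDiff ℝ 3 (deriv f) := step f 3 hf
  have hf2 : ContDiff ℝ 2 (deriv (deriv f)) := step _ 2 hf3
  have hf1 : ContDiff ℝ 1 (deriv (deriv (deriv f))) := step _ 1 hf2
  have hq3 : ContDiff ℝ 3 (deriv q) := step q 3 hq
  have hq2 : ContDiff ℝ 2 (deriv (deriv q)) := step _ 2 hq3
  have hq1 : ContDiff ℝ 1 (deriv (deriv (deriv q))) := step _ 1 hq2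
  have df0 : Differentiable ℝ f := hf.differentiable (by norm_num)
  have df1 : Differentiable ℝ (deriv f) := hf3.differentiable (by norm_num)
  have df2 : Differentiable ℝ (deriv (deriv f)) := hf2.differentiable (by norm_num)
  have df3 : Differentiable ℝ (deriv (deriv (deriv f))) := hf1.differentiable (by norm_num)
  have dq0 : Differentiable ℝ q := hq.differentiable (by norm_num)
  have dq1 : Differentiable ℝ (deriv q) := hq3.differentiable (by norm_num)
  have dq2 : Differentiable ℝ (deriv (deriv q)) := hq2.differentiable (by norm_num)
  have dq3 : Differentiable ℝ (deriv (deriv (deriv q))) := hq1.differentiable (by norm_num)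
  set f1 := deriv f with hf1d
  set f2 := deriv (deriv f) with hf2d
  set f3 := deriv (deriv (deriv f)) with hf3d
  set f4 := deriv (deriv (deriv (deriv f))) with hf4d
  set q1 := deriv q with hq1d
  set q2 := deriv (deriv q) with hq2d
  set q3 := deriv (deriv (deriv q)) with hq3d
  set q4 := deriv (deriv (deriv (deriv q))) with hq4d
  have If2 : iteratedDeriv 2 f = f2 := by
    rw [show (2:ℕ) = 1+1 from rfl, iteratedDeriv_succ, iteratedDeriv_one]
  have If3 : iteratedDeriv 3 f = f3 := by
    rw [show (3:ℕ) = 2+1 from rfl, iteratedDeriv_succ, If2]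
  have If4 : iteratedDeriv 4 f = f4 := by
    rw [show iteratedDeriv 4 f = deriv (iteratedDeriv 3 f) from iteratedDeriv_succ, If3]
  have Iq2 : iteratedDeriv 2 q = q2 := by
    rw [show (2:ℕ) = 1+1 from rfl, iteratedDeriv_succ, iteratedDeriv_one]
  have Iq3 : iteratedDeriv 3 q = q3 := by
    rw [show (3:ℕ) = 2+1 from rfl, iteratedDeriv_succ, Iq2]
  have Iq4 : iteratedDeriv 4 q = q4 := by
    rw [show iteratedDeriv 4 q = deriv (iteratedDeriv 3 q) from iteratedDeriv_succ, Iq3]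
  have Hq : ∀ t, HasDerivAt q (q1 t) t := fun t => (dq0 t).hasDerivAt
  have Hq1 : ∀ t, HasDerivAt q1 (q2 t) t := fun t => (dq1 t).hasDerivAt
  have Hq2 : ∀ t, HasDerivAt q2 (q3 t) t := fun t => (dq2 t).hasDerivAt
  have Hq3 : ∀ t, HasDerivAt q3 (q4 t) t := fun t => (dq3 t).hasDerivAt
  have Hf1 : ∀ t, HasDerivAt (fun s => f1 (q s)) (f2 (q t) * q1 t) t := fun t =>
    ((df1 (q t)).hasDerivAt).comp t (Hq t)
  have Hf2 : ∀ t, HasDerivAt (fun s => f2 (q s)) (f3 (q t) * q1 t) t := fun t =>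
    ((df2 (q t)).hasDerivAt).comp t (Hq t)
  have Hf3 : ∀ t, HasDerivAt (fun s => f3 (q s)) (f4 (q t) * q1 t) t := fun t =>
    ((df3 (q t)).hasDerivAt).comp t (Hq t)
  have D1 : deriv (f ∘ q) = fun t => f1 (q t) * q1 t := by
    funext t
    exact (((df0 (q t)).hasDerivAt).comp t (Hq t)).deriv
  have D2 : iteratedDeriv 2 (f ∘ q) = fun t => f2 (q t) * q1 t * q1 t + f1 (q t) * q2 t := by
    rw [show (2:ℕ) = 1+1 from rfl, iteratedDeriv_succ, iteratedDeriv_one, D1]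
    funext t
    exact (((Hf1 t).mul (Hq1 t))).deriv
  have E3 : ∀ t, HasDerivAt (fun s => f2 (q s) * q1 s * q1 s + f1 (q s) * q2 s)
      (f3 (q t) * (q1 t)^3 + 3 * f2 (q t) * q1 t * q2 t + f1 (q t) * q3 t) t := by
    intro t
    have h := (((Hf2 t).mul (Hq1 t)).mul (Hq1 t)).add ((Hf1 t).mul (Hq2 t))
    exact h.congr_deriv (by simp only [Pi.mul_apply, Pi.pow_apply]; ring)
  have D3' : iteratedDeriv 3 (f ∘ q) = fun t =>
      f3 (q t) * (q1 t)^3 + 3 * f2 (q t) * q1 t * q2 t + f1 (q t) * q3 t := by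
    rw [show (3:ℕ) = 2+1 from rfl, iteratedDeriv_succ, D2]
    funext t; exact (E3 t).deriv
  have E4 : ∀ t, HasDerivAt
      (fun s => f3 (q s) * (q1 s)^3 + 3 * f2 (q s) * q1 s * q2 s + f1 (q s) * q3 s)
      (f4 (q t) * (q1 t)^4 + 6 * f3 (q t) * (q1 t)^2 * q2 t + 3 * f2 (q t) * (q2 t)^2
        + 4 * f2 (q t) * q1 t * q3 t + f1 (q t) * q4 t) t := by
    intro t
    have h := ((((Hf3 t).mul ((Hq1 t).pow 3)).add
        ((((hasDerivAt_const t (3:ℝ)).mul (Hf2 t)).mul (Hq1 t)).mul (Hq2 t))).add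
      ((Hf1 t).mul (Hq3 t)))
    exact h.congr_deriv (by simp only [Pi.mul_apply, Pi.pow_apply]; ring)
  have D4 : iteratedDeriv 4 (f ∘ q) = fun t =>
      f4 (q t) * (q1 t)^4 + 6 * f3 (q t) * (q1 t)^2 * q2 t + 3 * f2 (q t) * (q2 t)^2
        + 4 * f2 (q t) * q1 t * q3 t + f1 (q t) * q4 t := by
    rw [show iteratedDeriv 4 (f ∘ q) = deriv (iteratedDeriv 3 (f ∘ q)) from iteratedDeriv_succ, D3']
    funext t; exact (E4 t).deriv
  intro t
  refine ⟨by rw [D1], ?_, ?_, ?_⟩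
  · simp only [D2, If2, Iq2]; ring
  · simp only [D3', If3, If2, Iq3, Iq2]
  · simp only [D4, If4, If3, If2, Iq4, Iq3, Iq2]

private lemma sum_lb2 (D : ℕ → ℝ) (hD : ∀ j, 0 ≤ D j) :
    D 1 * D 1 ≤ ∑ k ∈ Finset.Icc 2 2,
      ∑ j ∈ (Fintype.piFinset fun _ : Fin k => Finset.Icc 1 2).filter
          (fun j => ∑ i, j i = 2), ∏ i, D (j i) := by
  rw [Finset.Icc_self, Finset.sum_singleton]
  have hmem : (![1,1] : Fin 2 → ℕ) ∈ (Fintype.piFinset fun _ : Fin 2 => Finset.Icc 1 2).filter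
      (fun j => ∑ i, j i = 2) := by decide
  have := Finset.single_le_sum (f := fun j : Fin 2 → ℕ => ∏ i, D (j i))
    (fun j _ => Finset.prod_nonneg fun i _ => hD _) hmem
  simpa [Fin.prod_univ_two] using this

private lemma sum_lb3 (D : ℕ → ℝ) (hD : ∀ j, 0 ≤ D j) :
    D 1 * D 2 + D 1 * D 1 * D 1 ≤ ∑ k ∈ Finset.Icc 2 3,
      ∑ j ∈ (Fintype.piFinset fun _ : Fin k => Finset.Icc 1 3).filter
          (fun j => ∑ i, j i = 3), ∏ i, D (j i) := by
  rw [show Finset.Icc 2 3 = {2, 3} from rfl, Finset.sum_insert (by decide), Finset.sum_singleton]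
  have pnn : ∀ (k : ℕ) (j : Fin k → ℕ), (0:ℝ) ≤ ∏ i, D (j i) := fun k j =>
    Finset.prod_nonneg fun i _ => hD _
  have h2 : D 1 * D 2 ≤ ∑ j ∈ (Fintype.piFinset fun _ : Fin 2 => Finset.Icc 1 3).filter
      (fun j => ∑ i, j i = 3), ∏ i, D (j i) := by
    have hmem : (![1,2] : Fin 2 → ℕ) ∈ (Fintype.piFinset fun _ : Fin 2 => Finset.Icc 1 3).filter
      (fun j => ∑ i, j i = 3) := by decide
    have := Finset.single_le_sum (f := fun j : Fin 2 → ℕ => ∏ i, D (j i))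
      (fun j _ => pnn 2 j) hmem
    simpa [Fin.prod_univ_two] using this
  have h3 : D 1 * D 1 * D 1 ≤ ∑ j ∈ (Fintype.piFinset fun _ : Fin 3 => Finset.Icc 1 3).filter
      (fun j => ∑ i, j i = 3), ∏ i, D (j i) := by
    have hmem : (![1,1,1] : Fin 3 → ℕ) ∈ (Fintype.piFinset fun _ : Fin 3 => Finset.Icc 1 3).filter
      (fun j => ∑ i, j i = 3) := by decide
    have := Finset.single_le_sum (f := fun j : Fin 3 → ℕ => ∏ i, D (j i))
      (fun j _ => pnn 3 j) hmem
    simpa [Fin.prod_univ_three, mul_assoc] using this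
  linarith

private lemma sum_lb4 (D : ℕ → ℝ) (hD : ∀ j, 0 ≤ D j) :
    D 1 * D 3 + D 2 * D 2 + D 1 * D 1 * D 2 + D 1 * D 1 * (D 1 * D 1) ≤
    ∑ k ∈ Finset.Icc 2 4,
      ∑ j ∈ (Fintype.piFinset fun _ : Fin k => Finset.Icc 1 4).filter
          (fun j => ∑ i, j i = 4), ∏ i, D (j i) := by
  rw [show Finset.Icc 2 4 = {2, 3, 4} from rfl, Finset.sum_insert (by decide),
    Finset.sum_insert (by decide), Finset.sum_singleton]
  have pnn : ∀ (k : ℕ) (j : Fin k → ℕ), (0:ℝ) ≤ ∏ i, D (j i) := fun k j =>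
    Finset.prod_nonneg fun i _ => hD _
  have h2 : D 1 * D 3 + D 2 * D 2 ≤
      ∑ j ∈ (Fintype.piFinset fun _ : Fin 2 => Finset.Icc 1 4).filter
        (fun j => ∑ i, j i = 4), ∏ i, D (j i) := by
    have hsub : ({![1,3], ![2,2]} : Finset (Fin 2 → ℕ)) ⊆
        (Fintype.piFinset fun _ : Fin 2 => Finset.Icc 1 4).filter (fun j => ∑ i, j i = 4) := by
      decide
    have := Finset.sum_le_sum_of_subset_of_nonneg hsub (fun j _ _ => pnn 2 j)
    rw [Finset.sum_insert (by decide), Finset.sum_singleton] at this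
    simpa [Fin.prod_univ_two] using this
  have h3 : D 1 * D 1 * D 2 ≤
      ∑ j ∈ (Fintype.piFinset fun _ : Fin 3 => Finset.Icc 1 4).filter
        (fun j => ∑ i, j i = 4), ∏ i, D (j i) := by
    have hmem : (![1,1,2] : Fin 3 → ℕ) ∈ (Fintype.piFinset fun _ : Fin 3 => Finset.Icc 1 4).filter
      (fun j => ∑ i, j i = 4) := by decide
    have := Finset.single_le_sum (f := fun j : Fin 3 → ℕ => ∏ i, D (j i))
      (fun j _ => pnn 3 j) hmem
    simpa [Fin.prod_univ_three, mul_assoc] using this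
  have h4 : D 1 * D 1 * (D 1 * D 1) ≤
      ∑ j ∈ (Fintype.piFinset fun _ : Fin 4 => Finset.Icc 1 4).filter
        (fun j => ∑ i, j i = 4), ∏ i, D (j i) := by
    have hmem : (![1,1,1,1] : Fin 4 → ℕ) ∈ (Fintype.piFinset fun _ : Fin 4 => Finset.Icc 1 4).filter
      (fun j => ∑ i, j i = 4) := by decide
    have := Finset.single_le_sum (f := fun j : Fin 4 → ℕ => ∏ i, D (j i))
      (fun j _ => pnn 4 j) hmem
    simpa [Fin.prod_univ_four, mul_assoc] using this
  linarith

end helpers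

theorem eos_derivative_trading (c₀ : ℝ) (hc₀ : 0 < c₀) :
    ∃ C : ℝ, ∀ f q : ℝ → ℝ, ContDiff ℝ 4 f → ContDiff ℝ 4 q →
      (∀ x : ℝ, ∀ k : ℕ, 1 ≤ k → k ≤ 4 →
        |iteratedDeriv k f x| ≤ c₀ ∧ |iteratedDeriv k f x| ≤ c₀ * |deriv f x| ^ k) →
      ∀ r : ℕ, 1 ≤ r → r ≤ 4 → ∀ t : ℝ,
        |deriv f (q t) * iteratedDeriv r q t| ≤
          C * (|iteratedDeriv r (f ∘ q) t| +
            ∑ k ∈ Finset.Icc 2 r,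
              ∑ j ∈ (Fintype.piFinset fun _ : Fin k => Finset.Icc 1 r).filter
                  (fun j => ∑ i, j i = r),
                ∏ i, |iteratedDeriv (j i) (f ∘ q) t|) := by
  refine ⟨1 + 20 * (c₀ + c₀^2 + c₀^3), ?_⟩
  set C := 1 + 20 * (c₀ + c₀^2 + c₀^3) with hCdef
  have hc2 : 0 < c₀^2 := pow_pos hc₀ 2
  have hc3 : 0 < c₀^3 := pow_pos hc₀ 3
  have hC1 : 1 ≤ C := by rw [hCdef]; linarith [hc₀, hc2, hc3]
  have hCc : c₀ ≤ C := by rw [hCdef]; linarith [hc₀, hc2, hc3]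
  have hCc3 : 3*c₀ ≤ C := by rw [hCdef]; linarith [hc₀, hc2, hc3]
  have hCc4 : 4*c₀ ≤ C := by rw [hCdef]; linarith [hc₀, hc2, hc3]
  have hCp3 : c₀ + 3*c₀^2 ≤ C := by rw [hCdef]; linarith [hc₀, hc2, hc3]
  have hCp4 : c₀ + 10*c₀^2 + 15*c₀^3 ≤ C := by rw [hCdef]; linarith [hc₀, hc2, hc3]
  have hCp42 : 6*c₀ + 18*c₀^2 ≤ C := by rw [hCdef]; linarith [hc₀, hc2, hc3]
  have hC0 : 0 < C := by linarith
  intro f q hf hq h r hr1 hr4 t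
  obtain ⟨D1, D2, D3, D4⟩ := faa_di_bruno4 f q hf hq t
  have hF2 : |iteratedDeriv 2 f (q t)| ≤ c₀ * |deriv f (q t)| ^ 2 :=
    (h (q t) 2 (by norm_num) (by norm_num)).2
  have hF3 : |iteratedDeriv 3 f (q t)| ≤ c₀ * |deriv f (q t)| ^ 3 :=
    (h (q t) 3 (by norm_num) (by norm_num)).2
  have hF4 : |iteratedDeriv 4 f (q t)| ≤ c₀ * |deriv f (q t)| ^ 4 :=
    (h (q t) 4 (by norm_num) (by norm_num)).2
  set a := deriv f (q t) with ha
  set u1 := deriv q t with hu1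
  set u2 := iteratedDeriv 2 q t with hu2
  set u3 := iteratedDeriv 3 q t with hu3
  set u4 := iteratedDeriv 4 q t with hu4
  set F2 := iteratedDeriv 2 f (q t) with hFF2
  set F3 := iteratedDeriv 3 f (q t) with hFF3
  set F4 := iteratedDeriv 4 f (q t) with hFF4
  set B : ℕ → ℝ := fun j => |iteratedDeriv j (f ∘ q) t| with hB
  have hBnn : ∀ j, 0 ≤ B j := fun j => abs_nonneg _
  have hB1 : B 1 = |a * u1| := by rw [hB]; simp only [iteratedDeriv_one]; rw [D1]
  have hB2 : B 2 = |F2 * u1 ^ 2 + a * u2| := by rw [hB]; simp only []; rw [D2]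
  have hB3 : B 3 = |F3 * u1 ^ 3 + 3 * F2 * u1 * u2 + a * u3| := by
    rw [hB]; simp only []; rw [D3]
  have hB4 : B 4 = |F4 * u1 ^ 4 + 6 * F3 * u1 ^ 2 * u2 + 3 * F2 * u2 ^ 2
      + 4 * F2 * u1 * u3 + a * u4| := by rw [hB]; simp only []; rw [D4]
  -- basic abs bounds on the F-terms
  have habs2 : |F2 * u1 ^ 2| ≤ c₀ * |a * u1| ^ 2 := by
    rw [abs_mul, abs_pow, abs_mul, mul_pow]
    have : |F2| * |u1| ^ 2 ≤ (c₀ * |a| ^ 2) * |u1| ^ 2 :=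
      mul_le_mul_of_nonneg_right hF2 (by positivity)
    linarith [this]
  have habs3 : |F3 * u1 ^ 3| ≤ c₀ * |a * u1| ^ 3 := by
    rw [abs_mul, abs_pow, abs_mul, mul_pow]
    have : |F3| * |u1| ^ 3 ≤ (c₀ * |a| ^ 3) * |u1| ^ 3 :=
      mul_le_mul_of_nonneg_right hF3 (by positivity)
    linarith [this]
  have habs4 : |F4 * u1 ^ 4| ≤ c₀ * |a * u1| ^ 4 := by
    rw [abs_mul, abs_pow, abs_mul, mul_pow]
    have : |F4| * |u1| ^ 4 ≤ (c₀ * |a| ^ 4) * |u1| ^ 4 :=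
      mul_le_mul_of_nonneg_right hF4 (by positivity)
    linarith [this]
  have habs22 : |F2 * u1 * u2| ≤ c₀ * |a * u1| * |a * u2| := by
    rw [abs_mul, abs_mul, abs_mul, abs_mul]
    have h0 := mul_le_mul_of_nonneg_right hF2
      (mul_nonneg (abs_nonneg u1) (abs_nonneg u2))
    linarith [h0]
  have habs32 : |F3 * u1 ^ 2 * u2| ≤ c₀ * |a * u1| ^ 2 * |a * u2| := by
    rw [abs_mul, abs_mul, abs_pow, abs_mul, abs_mul, mul_pow]
    have h0 := mul_le_mul_of_nonneg_right hF3
      (mul_nonneg (pow_nonneg (abs_nonneg u1) 2) (abs_nonneg u2))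
    linarith [h0]
  have habs2sq : |F2 * u2 ^ 2| ≤ c₀ * |a * u2| ^ 2 := by
    rw [abs_mul, abs_pow, abs_mul, mul_pow]
    have : |F2| * |u2| ^ 2 ≤ (c₀ * |a| ^ 2) * |u2| ^ 2 :=
      mul_le_mul_of_nonneg_right hF2 (by positivity)
    linarith [this]
  have habs23 : |F2 * u1 * u3| ≤ c₀ * |a * u1| * |a * u3| := by
    rw [abs_mul, abs_mul, abs_mul, abs_mul]
    have h0 := mul_le_mul_of_nonneg_right hF2
      (mul_nonneg (abs_nonneg u1) (abs_nonneg u3))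
    linarith [h0]
  -- key bounds
  have k2 : |a * u2| ≤ B 2 + c₀ * |a * u1| ^ 2 := by
    have e : a * u2 = (F2 * u1 ^ 2 + a * u2) - F2 * u1 ^ 2 := by ring
    calc |a * u2| = |(F2 * u1 ^ 2 + a * u2) - F2 * u1 ^ 2| := by rw [← e]
    _ ≤ |F2 * u1 ^ 2 + a * u2| + |F2 * u1 ^ 2| := abs_sub _ _
    _ ≤ B 2 + c₀ * |a * u1| ^ 2 := by rw [hB2]; linarith [habs2]
  have k3 : |a * u3| ≤ B 3 + c₀ * |a * u1| ^ 3 + 3 * (c₀ * |a * u1| * |a * u2|) := by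
    have e : a * u3 = (F3 * u1 ^ 3 + 3 * F2 * u1 * u2 + a * u3)
        - F3 * u1 ^ 3 - 3 * (F2 * u1 * u2) := by ring
    calc |a * u3| = |(F3 * u1 ^ 3 + 3 * F2 * u1 * u2 + a * u3)
        - F3 * u1 ^ 3 - 3 * (F2 * u1 * u2)| := by rw [← e]
    _ ≤ |(F3 * u1 ^ 3 + 3 * F2 * u1 * u2 + a * u3) - F3 * u1 ^ 3| + |3 * (F2 * u1 * u2)| :=
        abs_sub _ _
    _ ≤ |F3 * u1 ^ 3 + 3 * F2 * u1 * u2 + a * u3| + |F3 * u1 ^ 3| + |3 * (F2 * u1 * u2)| := by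
        linarith [abs_sub (F3 * u1 ^ 3 + 3 * F2 * u1 * u2 + a * u3) (F3 * u1 ^ 3)]
    _ ≤ B 3 + c₀ * |a * u1| ^ 3 + 3 * (c₀ * |a * u1| * |a * u2|) := by
        have e1 : |(3:ℝ) * (F2 * u1 * u2)| = 3 * |F2 * u1 * u2| := by
          rw [abs_mul]; norm_num
        rw [hB3, e1]
        linarith [habs3, habs22]
  have k4 : |a * u4| ≤ B 4 + c₀ * |a * u1| ^ 4 + 6 * (c₀ * |a * u1| ^ 2 * |a * u2|)
      + 3 * (c₀ * |a * u2| ^ 2) + 4 * (c₀ * |a * u1| * |a * u3|) := by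
    have e : a * u4 = (F4 * u1 ^ 4 + 6 * F3 * u1 ^ 2 * u2 + 3 * F2 * u2 ^ 2
        + 4 * F2 * u1 * u3 + a * u4) - F4 * u1 ^ 4 - 6 * (F3 * u1 ^ 2 * u2)
        - 3 * (F2 * u2 ^ 2) - 4 * (F2 * u1 * u3) := by ring
    have step1 : |a * u4| ≤ |F4 * u1 ^ 4 + 6 * F3 * u1 ^ 2 * u2 + 3 * F2 * u2 ^ 2
        + 4 * F2 * u1 * u3 + a * u4| + |F4 * u1 ^ 4| + |6 * (F3 * u1 ^ 2 * u2)|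
        + |3 * (F2 * u2 ^ 2)| + |4 * (F2 * u1 * u3)| := by
      rw [show |a * u4| = |(F4 * u1 ^ 4 + 6 * F3 * u1 ^ 2 * u2 + 3 * F2 * u2 ^ 2
        + 4 * F2 * u1 * u3 + a * u4) - F4 * u1 ^ 4 - 6 * (F3 * u1 ^ 2 * u2)
        - 3 * (F2 * u2 ^ 2) - 4 * (F2 * u1 * u3)| from congrArg abs e]
      have h1 := abs_sub (F4 * u1 ^ 4 + 6 * F3 * u1 ^ 2 * u2 + 3 * F2 * u2 ^ 2
        + 4 * F2 * u1 * u3 + a * u4) (F4 * u1 ^ 4)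
      have h2 := abs_sub ((F4 * u1 ^ 4 + 6 * F3 * u1 ^ 2 * u2 + 3 * F2 * u2 ^ 2
        + 4 * F2 * u1 * u3 + a * u4) - F4 * u1 ^ 4) (6 * (F3 * u1 ^ 2 * u2))
      have h3 := abs_sub ((F4 * u1 ^ 4 + 6 * F3 * u1 ^ 2 * u2 + 3 * F2 * u2 ^ 2
        + 4 * F2 * u1 * u3 + a * u4) - F4 * u1 ^ 4 - 6 * (F3 * u1 ^ 2 * u2))
        (3 * (F2 * u2 ^ 2))
      have h4 := abs_sub ((F4 * u1 ^ 4 + 6 * F3 * u1 ^ 2 * u2 + 3 * F2 * u2 ^ 2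
        + 4 * F2 * u1 * u3 + a * u4) - F4 * u1 ^ 4 - 6 * (F3 * u1 ^ 2 * u2)
        - 3 * (F2 * u2 ^ 2)) (4 * (F2 * u1 * u3))
      linarith
    have e6 : |(6:ℝ) * (F3 * u1 ^ 2 * u2)| = 6 * |F3 * u1 ^ 2 * u2| := by
      rw [abs_mul]; norm_num
    have e3 : |(3:ℝ) * (F2 * u2 ^ 2)| = 3 * |F2 * u2 ^ 2| := by rw [abs_mul]; norm_num
    have e4 : |(4:ℝ) * (F2 * u1 * u3)| = 4 * |F2 * u1 * u3| := by rw [abs_mul]; norm_num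
    rw [e6, e3, e4] at step1
    rw [hB4]
    linarith [habs4, habs32, habs2sq, habs23]
  -- now split on r
  interval_cases r
  · -- r = 1
    rw [show Finset.Icc 2 1 = ∅ from rfl, Finset.sum_empty, add_zero]
    have : |a * iteratedDeriv 1 q t| = B 1 := by rw [hB1, iteratedDeriv_one]
    rw [this, show |iteratedDeriv 1 (f ∘ q) t| = B 1 from rfl]
    have := mul_le_mul_of_nonneg_right hC1 (hBnn 1)
    linarith [this]
  · -- r = 2
    have hS := sum_lb2 B hBnn
    have hgoal : |a * iteratedDeriv 2 q t| = |a * u2| := rfl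
    rw [hgoal, show |iteratedDeriv 2 (f ∘ q) t| = B 2 from rfl]
    set S := ∑ k ∈ Finset.Icc 2 2,
      ∑ j ∈ (Fintype.piFinset fun _ : Fin k => Finset.Icc 1 2).filter
          (fun j => ∑ i, j i = 2), ∏ i, B (j i) with hSdef
    rw [hB1] at hS
    set x := |a * u1| with hx0
    have hx : 0 ≤ x := abs_nonneg _
    have hCS := mul_le_mul_of_nonneg_left hS hC0.le
    have m0 : 0 ≤ (C - 1) * B 2 := mul_nonneg (by linarith) (hBnn 2)
    have m1 : 0 ≤ (C - c₀) * x ^ 2 := mul_nonneg (by linarith) (by positivity)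
    have e : x * x = x ^ 2 := by ring
    rw [e] at hCS
    linarith [k2, hCS, m0, m1]
  · -- r = 3
    have hS := sum_lb3 B hBnn
    rw [show |a * iteratedDeriv 3 q t| = |a * u3| from rfl,
      show |iteratedDeriv 3 (f ∘ q) t| = B 3 from rfl]
    rw [hB1] at hS
    set x := |a * u1| with hx0
    have hx : 0 ≤ x := abs_nonneg _
    have hB2n : 0 ≤ B 2 := hBnn 2
    have hB3n : 0 ≤ B 3 := hBnn 3
    have s1 := mul_le_mul_of_nonneg_left k2 (mul_nonneg (mul_nonneg
      (by norm_num : (0:ℝ) ≤ 3) hc₀.le) hx)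
    have key : |a * u3| ≤ B 3 + (c₀ + 3*c₀^2) * x^3 + 3*c₀*(x * B 2) := by
      linarith [k3, s1]
    have hCS := mul_le_mul_of_nonneg_left hS hC0.le
    have m0 : 0 ≤ (C - 1) * B 3 := mul_nonneg (by linarith) hB3n
    have m1 : 0 ≤ (C - (c₀ + 3*c₀^2)) * x^3 := mul_nonneg (by linarith) (by positivity)
    have m2 : 0 ≤ (C - 3*c₀) * (x * B 2) := mul_nonneg (by linarith) (mul_nonneg hx hB2n)
    have e : x * B 2 + x * x * x = x * B 2 + x ^ 3 := by ring
    rw [e] at hCS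
    linarith [key, hCS, m0, m1, m2]
  · -- r = 4
    have hS := sum_lb4 B hBnn
    rw [show |a * iteratedDeriv 4 q t| = |a * u4| from rfl,
      show |iteratedDeriv 4 (f ∘ q) t| = B 4 from rfl]
    rw [hB1] at hS
    set x := |a * u1| with hx0
    have hx : 0 ≤ x := abs_nonneg _
    have hB2n : 0 ≤ B 2 := hBnn 2
    have hB3n : 0 ≤ B 3 := hBnn 3
    have hB4n : 0 ≤ B 4 := hBnn 4
    have hv2 : 0 ≤ |a * u2| := abs_nonneg _
    have hv3 : 0 ≤ |a * u3| := abs_nonneg _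
    -- substitute k2 and k3 into k4
    have k3x : |a * u3| ≤ B 3 + c₀ * x^3 + 3*c₀*(x * B 2) + 3*c₀^2 * x^3 := by
      have s1 := mul_le_mul_of_nonneg_left k2 (mul_nonneg (mul_nonneg
        (by norm_num : (0:ℝ) ≤ 3) hc₀.le) hx)
      linarith [k3, s1]
    have t1 := mul_le_mul_of_nonneg_left k2 (mul_nonneg (mul_nonneg
      (by norm_num : (0:ℝ) ≤ 6) hc₀.le) (sq_nonneg x))
    have t2 : |a * u2|^2 ≤ (B 2 + c₀ * x^2)^2 := by
      have h := mul_le_mul k2 k2 hv2 (by positivity)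
      linarith [h]
    have t2' := mul_le_mul_of_nonneg_left t2 (mul_nonneg
      (by norm_num : (0:ℝ) ≤ 3) hc₀.le)
    have t3 := mul_le_mul_of_nonneg_left k3x (mul_nonneg (mul_nonneg
      (by norm_num : (0:ℝ) ≤ 4) hc₀.le) hx)
    have key : |a * u4| ≤ B 4 + (c₀ + 10*c₀^2 + 15*c₀^3) * x^4
        + (6*c₀ + 18*c₀^2) * (x^2 * B 2) + 3*c₀ * (B 2)^2 + 4*c₀ * (x * B 3) := by
      linarith [k4, t1, t2', t3]
    have hCS := mul_le_mul_of_nonneg_left hS hC0.le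
    have e : x * B 3 + B 2 * B 2 + x * x * B 2 + x * x * (x * x)
        = x * B 3 + (B 2)^2 + x^2 * B 2 + x^4 := by ring
    rw [e] at hCS
    have m0 : 0 ≤ (C - 1) * B 4 := mul_nonneg (by linarith) hB4n
    have m1 : 0 ≤ (C - (c₀ + 10*c₀^2 + 15*c₀^3)) * x^4 :=
      mul_nonneg (by linarith) (by positivity)
    have m2 : 0 ≤ (C - (6*c₀ + 18*c₀^2)) * (x^2 * B 2) :=
      mul_nonneg (by linarith) (mul_nonneg (by positivity) hB2n)
    have m3 : 0 ≤ (C - 3*c₀) * (B 2)^2 := mul_nonneg (by linarith) (by positivity)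
    have m4 : 0 ≤ (C - 4*c₀) * (x * B 3) := mul_nonneg (by linarith) (mul_nonneg hx hB3n)
    linarith [key, hCS, m0, m1, m2, m3, m4]
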